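/- There is an absolute constant c such that for every n and every function f: ℝⁿ → ℝ that is positively homogeneous of degree 1 (f(λx) = λ f(x) for all λ ≥ 0) and square-integrable against the standard Gaussian measure μₙ, one has ∫_{ℝⁿ} f² dμₙ ≤ c ∫_B f² dμₙ, where B = {x ∈ ℝⁿ : ‖x‖ ≤ n} is the Euclidean ball of radius n. -/

import Mathlib

open MeasureTheory ProbabilityTheory ENNReal NNReal Real

/-- The standard Gaussian probability measure on `ℝⁿ`. -/
noncomputable def stdGaussianMeasure (n : ℕ) : Measure (Fin n → ℝ) :=
  Measure.pi fun _ => gaussianReal 0 1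

section aux

noncomputable def d1 : ℝ → ℝ≥0∞ := fun x => ENNReal.ofReal (3 * Real.exp (-(4 * x ^ 2)))

lemma d1_meas : Measurable d1 :=
  ((measurable_id.pow_const 2).const_mul 4).neg.exp.const_mul 3 |>.ennreal_ofReal

lemma pdf_eq (x : ℝ) :
    gaussianPDFReal 0 (1/9) x = gaussianPDFReal 0 1 x * (3 * Real.exp (-(4 * x ^ 2))) := by
  unfold gaussianPDFReal
  have hc : ((1/9 : ℝ≥0) : ℝ) = 1/9 := by norm_num
  have hc1 : ((1 : ℝ≥0) : ℝ) = 1 := by norm_num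
  rw [hc, hc1]
  have h9 : Real.sqrt (2*π*(1/9)) = Real.sqrt (2*π) / 3 := by
    rw [show (2:ℝ)*π*(1/9) = (2*π)/9 by ring, Real.sqrt_div (by positivity),
      show (9:ℝ) = 3^2 by norm_num, Real.sqrt_sq (by norm_num)]
  rw [h9]
  have hE : -(x-0)^2/(2*(1/9:ℝ)) = (-(x-0)^2/(2*1)) + (-(4*x^2)) := by ring
  rw [hE, Real.exp_add, inv_div]
  have hπ : Real.sqrt (2*π) ≠ 0 := ne_of_gt (Real.sqrt_pos.mpr (by positivity))
  field_simp

lemma gauss_ninth : gaussianReal 0 (1/9) = (gaussianReal 0 1).withDensity d1 := by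
  rw [gaussianReal_of_var_ne_zero _ (by norm_num), gaussianReal_of_var_ne_zero _ (by norm_num),
    ← withDensity_mul _ (measurable_gaussianPDF 0 1) d1_meas]
  congr 1
  funext x
  show gaussianPDF 0 (1/9) x = gaussianPDF 0 1 x * d1 x
  unfold gaussianPDF d1
  rw [← ENNReal.ofReal_mul (gaussianPDFReal_nonneg 0 1 x), pdf_eq]

lemma lintegral_pi_prod' {n : ℕ} {E : Fin n → Type*} [∀ i, MeasurableSpace (E i)]
    (μ : ∀ i, Measure (E i)) [∀ i, SigmaFinite (μ i)]
    (g : ∀ i, E i → ℝ≥0∞) (hg : ∀ i, Measurable (g i)) :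
    ∫⁻ x, ∏ i, g i (x i) ∂(Measure.pi μ) = ∏ i, ∫⁻ y, g i y ∂(μ i) := by
  induction n with
  | zero => simp
  | succ n ih =>
    have h := (measurePreserving_piFinSuccAbove μ 0).symm
    have hm : Measurable fun x : (i : Fin (n+1)) → E i => ∏ i, g i (x i) :=
      Finset.measurable_prod _ fun i _ => (hg i).comp (measurable_pi_apply i)
    rw [← h.lintegral_comp hm]
    simp_rw [Fin.prod_univ_succAbove _ 0, MeasurableEquiv.piFinSuccAbove_symm_apply,
      Fin.insertNthEquiv, Equiv.coe_fn_mk, Fin.insertNth_apply_same, Fin.insertNth_apply_succAbove]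
    have hm2 : Measurable fun b : (j : Fin n) → E (Fin.succAbove 0 j) =>
        ∏ j : Fin n, g (Fin.succAbove 0 j) (b j) :=
      Finset.measurable_prod _ fun j _ => (hg _).comp (measurable_pi_apply j)
    rw [lintegral_prod_mul (hg 0).aemeasurable hm2.aemeasurable,
      ih (fun j => μ (Fin.succAbove 0 j)) (fun j => g (Fin.succAbove 0 j)) (fun j => hg _)]

lemma pi_ninth (n : ℕ) :
    (Measure.pi fun _ : Fin n => gaussianReal 0 (1/9)) =
      (Measure.pi fun _ : Fin n => gaussianReal 0 1).withDensity (fun y => ∏ i, d1 (y i)) := by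
  refine Measure.pi_eq fun s hs => ?_
  rw [withDensity_apply _ (MeasurableSet.univ_pi hs),
    ← lintegral_indicator (MeasurableSet.univ_pi hs)]
  have hind : (Set.univ.pi s).indicator (fun y => ∏ i, d1 (y i))
      = fun y => ∏ i, (s i).indicator d1 (y i) := by
    funext y
    by_cases hy : y ∈ Set.univ.pi s
    · rw [Set.indicator_of_mem hy]
      exact Finset.prod_congr rfl fun i _ =>
        (Set.indicator_of_mem (hy i (Set.mem_univ i)) d1).symm
    · rw [Set.indicator_of_notMem hy]
      obtain ⟨i, hi⟩ := not_forall.mp (by simpa [Set.mem_univ_pi] using hy)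
      exact (Finset.prod_eq_zero (Finset.mem_univ i)
        (Set.indicator_of_notMem hi d1)).symm
  rw [hind, lintegral_pi_prod' _ _ (fun i => (d1_meas.indicator (hs i)))]
  refine Finset.prod_congr rfl fun i _ => ?_
  rw [gauss_ninth, withDensity_apply _ (hs i), lintegral_indicator (hs i)]

lemma mp1 : MeasurePreserving (fun x : ℝ => 3 * x) (gaussianReal 0 (1/9)) (gaussianReal 0 1) := by
  refine ⟨measurable_const_mul 3, ?_⟩
  have h := gaussianReal_map_const_mul (μ := 0) (v := 1/9) (3:ℝ)
  rw [show ((3:ℝ) * ·) = (fun x : ℝ => 3 * x) from rfl] at h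
  rw [h]
  norm_num
  congr 1
  ext
  norm_num

lemma exp43 : (3:ℝ) ≤ Real.exp (4/3) := by
  have h1 := Real.exp_one_gt_d9
  have h2 : (1:ℝ) + 1/3 ≤ Real.exp (1/3) := by linarith [Real.add_one_le_exp (1/3 : ℝ)]
  calc (3:ℝ) ≤ 2.7182818283 * (1 + 1/3) := by norm_num
    _ ≤ Real.exp 1 * Real.exp (1/3) := by nlinarith [Real.exp_pos (1/3:ℝ)]
    _ = Real.exp (4/3) := by rw [← Real.exp_add]; norm_num

lemma lemA (n : ℕ) : (3:ℝ)^n * Real.exp (-(4 * (n:ℝ)^2 / 9)) ≤ 9 := by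
  have hexp1 : Real.exp (-(4 * (n:ℝ)^2 / 9)) ≤ 1 :=
    Real.exp_le_one_iff.mpr (neg_nonpos.mpr (by positivity))
  rcases le_or_gt n 2 with h | h
  · have h1 : (3:ℝ)^n ≤ 9 := by
      calc (3:ℝ)^n ≤ 3^2 := pow_le_pow_right₀ (by norm_num) h
        _ = 9 := by norm_num
    nlinarith [Real.exp_pos (-(4 * (n:ℝ)^2 / 9)), pow_pos (by norm_num : (0:ℝ) < 3) n]
  · have hn3 : (3:ℝ) ≤ n := by exact_mod_cast h
    have key : (3:ℝ)^n ≤ Real.exp (4 * (n:ℝ)^2 / 9) := by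
      calc (3:ℝ)^n ≤ (Real.exp (4/3))^n := pow_le_pow_left₀ (by norm_num) exp43 n
        _ = Real.exp ((n:ℕ) * (4/3 : ℝ)) := (Real.exp_nat_mul _ n).symm
        _ ≤ Real.exp (4 * (n:ℝ)^2 / 9) := Real.exp_le_exp.mpr (by nlinarith)
    calc (3:ℝ)^n * Real.exp (-(4 * (n:ℝ)^2 / 9))
        ≤ Real.exp (4 * (n:ℝ)^2 / 9) * Real.exp (-(4 * (n:ℝ)^2 / 9)) :=
          mul_le_mul_of_nonneg_right key (Real.exp_pos _).le
      _ = 1 := by rw [← Real.exp_add]; simp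
      _ ≤ 9 := by norm_num

lemma lemB {n : ℕ} (hn : 1 ≤ n) : (9:ℝ) * ((3:ℝ)^n * Real.exp (-(4 * (n:ℝ)^2))) ≤ 1/2 := by
  have he4 : (54:ℝ) ≤ Real.exp 4 := by
    have h1 : (2.7182818283:ℝ)^4 ≤ Real.exp 1 ^ 4 :=
      pow_le_pow_left₀ (by norm_num) Real.exp_one_gt_d9.le 4
    have h2 : Real.exp 1 ^ 4 = Real.exp 4 := by
      rw [show (4:ℝ) = ((4:ℕ) : ℝ) * 1 by norm_num, Real.exp_nat_mul]
    nlinarith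
  have hbase : (3:ℝ) * Real.exp (-4) ≤ 1/18 := by
    rw [Real.exp_neg]
    have hinv : (Real.exp 4)⁻¹ ≤ 54⁻¹ := inv_anti₀ (by norm_num) he4
    linarith
  have hn1 : (1:ℝ) ≤ n := by exact_mod_cast hn
  have h1 : Real.exp (-(4 * (n:ℝ)^2)) ≤ Real.exp ((n:ℕ) * (-4:ℝ)) :=
    Real.exp_le_exp.mpr (by nlinarith)
  have h2 : (3:ℝ)^n * Real.exp ((n:ℕ) * (-4:ℝ)) = ((3:ℝ) * Real.exp (-4))^n := by
    rw [mul_pow, Real.exp_nat_mul]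
  have h3 : ((3:ℝ) * Real.exp (-4))^n ≤ 1/18 := by
    calc ((3:ℝ) * Real.exp (-4))^n ≤ (1/18:ℝ)^n := pow_le_pow_left₀ (by positivity) hbase n
      _ ≤ (1/18:ℝ)^1 := pow_le_pow_of_le_one (by norm_num) (by norm_num) hn
      _ = 1/18 := pow_one _
  have hp : (0:ℝ) < 3^n := pow_pos (by norm_num) n
  nlinarith [Real.exp_pos (-(4 * (n:ℝ)^2)), Real.exp_pos ((n:ℕ) * (-4:ℝ))]

end aux

theorem stmt7 :
    ∃ c : ℝ, 0 < c ∧ ∀ (n : ℕ) (f : (Fin n → ℝ) → ℝ), Measurable f →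
      (∀ (l : ℝ), 0 ≤ l → ∀ x, f (l • x) = l * f x) →
      Integrable (fun x => f x ^ 2) (stdGaussianMeasure n) →
      ∫ x, f x ^ 2 ∂(stdGaussianMeasure n) ≤
        c * ∫ x in {x : Fin n → ℝ | ∑ i, x i ^ 2 ≤ (n : ℝ) ^ 2}, f x ^ 2
              ∂(stdGaussianMeasure n) := by
  refine ⟨163, by norm_num, fun n f hf hhom hint => ?_⟩
  set μ := stdGaussianMeasure n with hμdef
  set Ball : Set (Fin n → ℝ) := {x | ∑ i, x i ^ 2 ≤ (n : ℝ) ^ 2} with hBalldef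
  have hBallm : MeasurableSet Ball :=
    measurableSet_le (Finset.measurable_sum _ fun i _ => (measurable_pi_apply i).pow_const 2)
      measurable_const
  set F : (Fin n → ℝ) → ℝ≥0∞ := fun x => ENNReal.ofReal (f x ^ 2) with hFdef
  have hFm : Measurable F := (hf.pow_const 2).ennreal_ofReal
  set B := ∫⁻ x in Ball, F x ∂μ with hBdef
  set T := ∫⁻ x in Ballᶜ, F x ∂μ with hTdef
  have hMsplit : ∫⁻ x, F x ∂μ = B + T := (lintegral_add_compl F hBallm).symm
  have hMfin : ∫⁻ x, F x ∂μ < ⊤ := by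
    have h := hint.2
    rwa [hasFiniteIntegral_iff_ofReal (ae_of_all _ fun x => sq_nonneg (f x))] at h
  have hBfin : B ≠ ⊤ := by
    refine ne_of_lt (lt_of_le_of_lt ?_ hMfin)
    exact setLIntegral_le_lintegral _ _
  have hTfin : T ≠ ⊤ := by
    refine ne_of_lt (lt_of_le_of_lt ?_ hMfin)
    exact setLIntegral_le_lintegral _ _
  -- the key bound on the tail
  have hTle : T.toReal ≤ 162 * B.toReal := by
    rcases Nat.eq_zero_or_pos n with hn0 | hn1
    · have hBu : Ball = Set.univ := by
        subst hn0
        refine Set.eq_univ_of_forall fun x => ?_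
        simp [hBalldef]
      have : T = 0 := by
        rw [hTdef, hBu, Set.compl_univ, Measure.restrict_empty, lintegral_zero_measure]
      rw [this]
      simp [ENNReal.toReal_nonneg]
    · -- main case n ≥ 1
      set ν : Measure (Fin n → ℝ) := Measure.pi fun _ => gaussianReal 0 (1/9) with hνdef
      set S : Set (Fin n → ℝ) := {y | (n:ℝ)^2 < 9 * ∑ i, y i ^ 2} with hSdef
      have hSm : MeasurableSet S :=
        measurableSet_lt measurable_const
          ((Finset.measurable_sum _ fun i _ => (measurable_pi_apply i).pow_const 2).const_mul 9)
      have hmp : MeasurePreserving (fun y : Fin n → ℝ => (3:ℝ) • y) ν μ := by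
        have h := measurePreserving_pi (fun _ : Fin n => gaussianReal 0 (1/9))
          (fun _ => gaussianReal 0 1) (fun _ => mp1)
        have he : (fun y : Fin n → ℝ => (3:ℝ) • y) = fun a i => 3 * a i := by
          funext y i
          simp [Pi.smul_apply, smul_eq_mul]
        rw [hμdef]; unfold stdGaussianMeasure
        rw [he]
        exact h
      -- membership transfer
      have hsum3 : ∀ y : Fin n → ℝ, ∑ i, ((3:ℝ) • y) i ^ 2 = 9 * ∑ i, y i ^ 2 := by
        intro y
        rw [Finset.mul_sum]
        refine Finset.sum_congr rfl fun i _ => ?_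
        simp only [Pi.smul_apply, smul_eq_mul]
        ring
      have hmem : ∀ y : Fin n → ℝ, ((3:ℝ) • y ∈ Ballᶜ) ↔ y ∈ S := by
        intro y
        simp only [Set.mem_compl_iff, Set.mem_setOf_eq, hBalldef, hSdef, not_le, hsum3 y]
      -- step 1 : T = 9 * ∫⁻ y in S, F y ∂ν
      have hstep1 : T = 9 * ∫⁻ y in S, F y ∂ν := by
        have e1 : T = ∫⁻ x, Ballᶜ.indicator F x ∂μ :=
          (lintegral_indicator hBallm.compl F).symm
        have e2 : ∫⁻ x, Ballᶜ.indicator F x ∂μ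
            = ∫⁻ y, Ballᶜ.indicator F ((3:ℝ) • y) ∂ν :=
          (hmp.lintegral_comp (hFm.indicator hBallm.compl)).symm
        have e3 : ∀ y : Fin n → ℝ, Ballᶜ.indicator F ((3:ℝ) • y)
            = S.indicator (fun y => 9 * F y) y := by
          intro y
          by_cases hy : y ∈ S
          · rw [Set.indicator_of_mem ((hmem y).mpr hy), Set.indicator_of_mem hy]
            show ENNReal.ofReal (f ((3:ℝ) • y) ^ 2) = 9 * ENNReal.ofReal (f y ^ 2)
            rw [hhom 3 (by norm_num) y, mul_pow, show ((3:ℝ)^2) = 9 by norm_num,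
              ENNReal.ofReal_mul (by norm_num)]
            norm_num
          · rw [Set.indicator_of_notMem (fun hc => hy ((hmem y).mp hc)),
              Set.indicator_of_notMem hy]
        rw [e1, e2]
        simp_rw [e3]
        rw [lintegral_indicator hSm, lintegral_const_mul 9 hFm]
      -- step 2 : density comparison
      set D : (Fin n → ℝ) → ℝ≥0∞ :=
        fun y => ENNReal.ofReal ((3:ℝ)^n * Real.exp (-(4 * ∑ i, y i ^ 2))) with hDdef
      have hDm : Measurable D := by
        apply Measurable.ennreal_ofReal
        exact ((Finset.measurable_sum _ fun i _ =>
          (measurable_pi_apply i).pow_const 2).const_mul 4).neg.exp.const_mul _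
      have hν : ν = μ.withDensity D := by
        rw [hνdef, hμdef]; unfold stdGaussianMeasure
        rw [pi_ninth n]
        congr 1
        funext y
        rw [hDdef]
        unfold d1
        rw [← ENNReal.ofReal_prod_of_nonneg (fun i _ => by positivity)]
        congr 1
        rw [Finset.prod_mul_distrib, Finset.prod_const, ← Real.exp_sum]
        congr 2
        · simp
        · rw [Finset.mul_sum, ← Finset.sum_neg_distrib]
      have hstep2 : ∫⁻ y in S, F y ∂ν = ∫⁻ y in S, D y * F y ∂μ := by
        rw [hν, restrict_withDensity hSm, lintegral_withDensity_eq_lintegral_mul _ hDm hFm]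
        rfl
      -- step 3 : split
      have hsub : S ⊆ (S ∩ Ball) ∪ Ballᶜ := by
        intro y hy
        by_cases hb : y ∈ Ball
        · exact Or.inl ⟨hy, hb⟩
        · exact Or.inr hb
      set C1 : ℝ≥0∞ := ENNReal.ofReal ((3:ℝ)^n * Real.exp (-(4 * (n:ℝ)^2 / 9))) with hC1def
      set C2 : ℝ≥0∞ := ENNReal.ofReal ((3:ℝ)^n * Real.exp (-(4 * (n:ℝ)^2))) with hC2def
      have hbound1 : ∫⁻ y in S ∩ Ball, D y * F y ∂μ ≤ C1 * B := by
        calc ∫⁻ y in S ∩ Ball, D y * F y ∂μ ≤ ∫⁻ y in S ∩ Ball, C1 * F y ∂μ := by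
              refine setLIntegral_mono (hFm.const_mul C1) fun y hy => ?_
              refine mul_le_mul_left ?_ _
              rw [hDdef, hC1def]
              refine ENNReal.ofReal_le_ofReal ?_
              refine mul_le_mul_of_nonneg_left (Real.exp_le_exp.mpr ?_) (by positivity)
              have := hy.1
              rw [hSdef, Set.mem_setOf_eq] at this
              linarith
          _ = C1 * ∫⁻ y in S ∩ Ball, F y ∂μ := lintegral_const_mul C1 hFm
          _ ≤ C1 * B := mul_le_mul_right (lintegral_mono_set Set.inter_subset_right) _
      have hbound2 : ∫⁻ y in Ballᶜ, D y * F y ∂μ ≤ C2 * T := by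
        calc ∫⁻ y in Ballᶜ, D y * F y ∂μ ≤ ∫⁻ y in Ballᶜ, C2 * F y ∂μ := by
              refine setLIntegral_mono (hFm.const_mul C2) fun y hy => ?_
              refine mul_le_mul_left ?_ _
              rw [hDdef, hC2def]
              refine ENNReal.ofReal_le_ofReal ?_
              refine mul_le_mul_of_nonneg_left (Real.exp_le_exp.mpr ?_) (by positivity)
              have : ¬ (∑ i, y i ^ 2 ≤ (n:ℝ)^2) := hy
              push_neg at this
              linarith
          _ = C2 * ∫⁻ y in Ballᶜ, F y ∂μ := lintegral_const_mul C2 hFm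
          _ = C2 * T := rfl
      have hkey : T ≤ ENNReal.ofReal 81 * B + ENNReal.ofReal (1/2) * T := by
        calc T = 9 * ∫⁻ y in S, F y ∂ν := hstep1
          _ = 9 * ∫⁻ y in S, D y * F y ∂μ := by rw [hstep2]
          _ ≤ 9 * (∫⁻ y in (S ∩ Ball) ∪ Ballᶜ, D y * F y ∂μ) :=
              mul_le_mul_right (lintegral_mono_set hsub) _
          _ ≤ 9 * (∫⁻ y in S ∩ Ball, D y * F y ∂μ + ∫⁻ y in Ballᶜ, D y * F y ∂μ) :=
              mul_le_mul_right (lintegral_union_le _ _ _) _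
          _ ≤ 9 * (C1 * B + C2 * T) := mul_le_mul_right (add_le_add hbound1 hbound2) _
          _ = (9 * C1) * B + (9 * C2) * T := by ring
          _ ≤ ENNReal.ofReal 81 * B + ENNReal.ofReal (1/2) * T := by
              refine add_le_add (mul_le_mul_left ?_ _) (mul_le_mul_left ?_ _)
              · rw [hC1def, show (9 : ℝ≥0∞) = ENNReal.ofReal 9 by norm_num,
                  ← ENNReal.ofReal_mul (by norm_num)]
                refine ENNReal.ofReal_le_ofReal ?_
                nlinarith [lemA n, pow_pos (show (0:ℝ) < 3 by norm_num) n,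
                  Real.exp_pos (-(4 * (n:ℝ)^2 / 9))]
              · rw [hC2def, show (9 : ℝ≥0∞) = ENNReal.ofReal 9 by norm_num,
                  ← ENNReal.ofReal_mul (by norm_num)]
                exact ENNReal.ofReal_le_ofReal (lemB hn1)
      -- pass to real numbers
      have hrhs_ne : ENNReal.ofReal 81 * B + ENNReal.ofReal (1/2) * T ≠ ⊤ :=
        ENNReal.add_ne_top.mpr ⟨ENNReal.mul_ne_top ENNReal.ofReal_ne_top hBfin,
          ENNReal.mul_ne_top ENNReal.ofReal_ne_top hTfin⟩
      have h1 := ENNReal.toReal_mono hrhs_ne hkey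
      rw [ENNReal.toReal_add (ENNReal.mul_ne_top ENNReal.ofReal_ne_top hBfin)
          (ENNReal.mul_ne_top ENNReal.ofReal_ne_top hTfin),
        ENNReal.toReal_mul, ENNReal.toReal_mul, ENNReal.toReal_ofReal (by norm_num : (0:ℝ) ≤ 81),
        ENNReal.toReal_ofReal (by norm_num : (0:ℝ) ≤ 1/2)] at h1
      linarith
  -- final conversion
  have hI1 : ∫ x, f x ^ 2 ∂μ = (B + T).toReal := by
    rw [integral_eq_lintegral_of_nonneg_ae (ae_of_all _ fun x => sq_nonneg (f x))
      (hf.pow_const 2).aestronglyMeasurable, ← hMsplit]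
  have hI2 : ∫ x in Ball, f x ^ 2 ∂μ = B.toReal := by
    rw [integral_eq_lintegral_of_nonneg_ae (ae_of_all _ fun x => sq_nonneg (f x))
      (hf.pow_const 2).aestronglyMeasurable]
  rw [hI1, hI2, ENNReal.toReal_add hBfin hTfin]
  have hBnn : 0 ≤ B.toReal := ENNReal.toReal_nonneg
  linarith
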